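/- Let K be a family of continuous functions f : ℝ^d → ℝ that is uniformly equicontinuous on every closed ball in ℝ^d (i.e., for each ball B, sup_{f ∈ K} ω(f, B, δ) → 0 as δ → 0+, where ω(f, B, δ) = sup{|f(t₁) − f(t₂)| : t₁, t₂ ∈ B, |t₁ − t₂| ≤ δ}). Then there exists a homeomorphism ψ of ℝ^d onto itself such that the family {f ∘ ψ : f ∈ K} is uniformly equicontinuous on all of ℝ^d. -/

import Mathlib

set_option maxHeartbeats 1000000


variable {E : Type*} [NormedAddCommGroup E] [NormedSpace ℝ E]

noncomputable def radialMap (g : ℝ → ℝ) (x : E) : E := (g ‖x‖ / ‖x‖) • x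

lemma radialMap_zero (g : ℝ → ℝ) : radialMap g (0 : E) = 0 := by simp [radialMap]

lemma norm_radialMap (g : ℝ → ℝ) (hg0 : g 0 = 0) (hmono : Monotone g) (x : E) :
    ‖radialMap g x‖ = g ‖x‖ := by
  rcases eq_or_ne x 0 with rfl | hx
  · simp [radialMap, hg0]
  · have hx' : (0:ℝ) < ‖x‖ := norm_pos_iff.2 hx
    have hg : 0 ≤ g ‖x‖ := hg0 ▸ hmono (norm_nonneg x)
    rw [radialMap, norm_smul, Real.norm_eq_abs, abs_div, abs_of_nonneg hg,
      abs_of_pos hx', div_mul_cancel₀ _ hx'.ne']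

lemma radialMap_radialMap (e : ℝ ≃o ℝ) (he : e 0 = 0) (x : E) :
    radialMap e.symm (radialMap e x) = x := by
  rcases eq_or_ne x 0 with rfl | hx
  · simp [radialMap]
  · have hx' : (0:ℝ) < ‖x‖ := norm_pos_iff.2 hx
    have hgpos : 0 < e ‖x‖ := by
      have := e.strictMono hx'
      rwa [he] at this
    have hnorm : ‖radialMap e x‖ = e ‖x‖ :=
      norm_radialMap e he e.monotone x
    rw [radialMap, hnorm, radialMap, e.symm_apply_apply, smul_smul]
    rw [div_mul_div_comm, mul_comm, div_self (by positivity), one_smul]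

lemma continuous_radialMap (g : ℝ → ℝ) (hg : Continuous g) (hg0 : g 0 = 0)
    (hmono : Monotone g) : Continuous (radialMap g (E := E)) := by
  rw [continuous_iff_continuousAt]
  intro x
  rcases eq_or_ne x 0 with rfl | hx
  · rw [ContinuousAt, radialMap_zero, tendsto_zero_iff_norm_tendsto_zero]
    have : (fun x : E => ‖radialMap g x‖) = fun x : E => g ‖x‖ := by
      funext x; exact norm_radialMap g hg0 hmono x
    rw [this]
    have : Filter.Tendsto (fun x : E => g ‖x‖) (nhds 0) (nhds (g ‖(0:E)‖)) :=
      (hg.comp continuous_norm).continuousAt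
    simpa [hg0] using this
  · have hx' : ‖x‖ ≠ 0 := norm_ne_zero_iff.2 hx
    exact (((hg.comp continuous_norm).continuousAt.div
      continuous_norm.continuousAt hx').smul continuousAt_id)

noncomputable def radialHomeo (e : ℝ ≃o ℝ) (he : e 0 = 0) : E ≃ₜ E where
  toFun := radialMap e
  invFun := radialMap e.symm
  left_inv x := radialMap_radialMap e he x
  right_inv x := by
    have hes : e.symm 0 = 0 := by rw [OrderIso.symm_apply_eq, he]
    have := radialMap_radialMap e.symm hes x
    rwa [OrderIso.symm_symm] at this
  continuous_toFun := continuous_radialMap e e.continuous he e.monotone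
  continuous_invFun := by
    have hes : e.symm 0 = 0 := by rw [OrderIso.symm_apply_eq, he]
    exact continuous_radialMap e.symm e.symm.continuous hes e.symm.monotone

lemma radialHomeo_apply (e : ℝ ≃o ℝ) (he : e 0 = 0) (x : E) :
    radialHomeo e he x = radialMap e x := rfl

/-- The key quantitative estimate for radial maps. -/
lemma norm_radialMap_sub_le (g : ℝ → ℝ) {L C : ℝ} (x y : E)
    (hy : 0 < ‖y‖) (hxy : ‖y‖ ≤ ‖x‖)
    (hgy0 : 0 ≤ g ‖y‖)
    (hgC : g ‖y‖ / ‖y‖ ≤ C)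
    (hgL : g ‖x‖ - g ‖y‖ ≤ L * (‖x‖ - ‖y‖))
    (hgmono : g ‖y‖ ≤ g ‖x‖) (hL : 0 ≤ L) :
    ‖radialMap g x - radialMap g y‖ ≤ (2*L + 2*C) * ‖x - y‖ := by
  set a := ‖x‖ with ha
  set b := ‖y‖ with hb
  have hapos : 0 < a := lt_of_lt_of_le hy hxy
  have hC0 : 0 ≤ C := le_trans (by positivity) hgC
  have hdecomp : radialMap g x - radialMap g y
      = (g a / a) • (x - y) + ((g a / a) - (g b / b)) • y := by
    rw [radialMap, radialMap, smul_sub, sub_smul]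
    abel
  have hsub : a - b ≤ ‖x - y‖ := by
    calc a - b ≤ |a - b| := le_abs_self _
    _ ≤ ‖x - y‖ := abs_norm_sub_norm_le x y
  have hba : 0 ≤ a - b := by linarith
  have hgbb : g b ≤ C * b := by
    rw [div_le_iff₀ hy] at hgC; linarith
  -- bound 1 : g a / a ≤ L + C
  have h1 : g a / a ≤ L + C := by
    rw [div_le_iff₀ hapos]
    have : g a ≤ C * b + L * (a - b) := by linarith
    nlinarith
  have h10 : 0 ≤ g a / a := div_nonneg (hgy0.trans hgmono) hapos.le
  -- bound 2 : |g a / a - g b / b| * b ≤ (L + C) * (a - b)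
  have h2 : |g a / a - g b / b| * b ≤ (L + C) * (a - b) := by
    have key : |b * g a - a * g b| ≤ a * ((L + C) * (a - b)) := by
      rw [abs_le]
      constructor
      · nlinarith [mul_nonneg hy.le (sub_nonneg.2 hgmono),
          mul_le_mul_of_nonneg_left hgbb hba,
          mul_nonneg (mul_nonneg hL hba) hapos.le,
          mul_le_mul_of_nonneg_left hxy (mul_nonneg hC0 hba)]
      · nlinarith [mul_le_mul_of_nonneg_left hgL hy.le,
          mul_le_mul_of_nonneg_left hxy (mul_nonneg hL hba),
          mul_nonneg hapos.le hgy0,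
          mul_nonneg (mul_nonneg hC0 hba) hapos.le]
    have heq : (g a / a - g b / b) * b = (b * g a - a * g b) / a := by
      field_simp
    calc |g a / a - g b / b| * b = |(g a / a - g b / b) * b| := by
          rw [abs_mul, abs_of_pos hy]
      _ = |b * g a - a * g b| / a := by rw [heq, abs_div, abs_of_pos hapos]
      _ ≤ (L + C) * (a - b) := by
          rw [div_le_iff₀ hapos]; linarith [key]
  calc ‖radialMap g x - radialMap g y‖
      ≤ ‖(g a / a) • (x - y)‖ + ‖((g a / a) - (g b / b)) • y‖ := by
        rw [hdecomp]; exact norm_add_le _ _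
    _ = (g a / a) * ‖x - y‖ + |g a / a - g b / b| * b := by
        rw [norm_smul, norm_smul, Real.norm_eq_abs, Real.norm_eq_abs,
          abs_of_nonneg h10]
    _ ≤ (L + C) * ‖x - y‖ + (L + C) * (a - b) := by
        have := mul_le_mul_of_nonneg_right h1 (norm_nonneg (x - y))
        linarith [h2]
    _ ≤ (2*L + 2*C) * ‖x - y‖ := by nlinarith [norm_nonneg (x - y)]


namespace Stmt4

noncomputable def S (Δ : ℕ → ℝ) (n : ℕ) : ℝ := ∑ k ∈ Finset.range n, Δ k

variable {Δ : ℕ → ℝ}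

lemma S_zero (Δ : ℕ → ℝ) : S Δ 0 = 0 := by simp [S]

lemma S_succ (Δ : ℕ → ℝ) (n : ℕ) : S Δ (n + 1) = S Δ n + Δ n := Finset.sum_range_succ _ _

lemma Δ_pos (Δ : ℕ → ℝ) (hΔ : ∀ n, 1 ≤ Δ n) (n : ℕ) : 0 < Δ n := lt_of_lt_of_le one_pos (hΔ n)

lemma S_nonneg (Δ : ℕ → ℝ) (hΔ : ∀ n, 1 ≤ Δ n) (n : ℕ) : 0 ≤ S Δ n :=
  Finset.sum_nonneg fun k _ => (Δ_pos Δ hΔ k).le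

lemma S_mono (Δ : ℕ → ℝ) (hΔ : ∀ n, 1 ≤ Δ n) : Monotone (S Δ) := by
  apply monotone_nat_of_le_succ
  intro n
  rw [S_succ]
  linarith [Δ_pos Δ hΔ n]

lemma le_S (Δ : ℕ → ℝ) (hΔ : ∀ n, 1 ≤ Δ n) (n : ℕ) : (n : ℝ) ≤ S Δ n := by
  induction n with
  | zero => simp [S_zero]
  | succ n ih =>
    rw [S_succ]
    push_cast
    linarith [hΔ n]

lemma exists_lt_S (Δ : ℕ → ℝ) (hΔ : ∀ n, 1 ≤ Δ n) (t : ℝ) : ∃ n, t < S Δ (n + 1) := by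
  obtain ⟨n, hn⟩ := exists_nat_gt t
  refine ⟨n, lt_of_lt_of_le hn (le_trans ?_ (le_S Δ hΔ (n+1)))⟩
  exact_mod_cast Nat.le_succ n

open Classical in
noncomputable def idx (Δ : ℕ → ℝ) (hΔ : ∀ n, 1 ≤ Δ n) (t : ℝ) : ℕ := Nat.find (exists_lt_S Δ hΔ t)

lemma lt_S_idx_succ (Δ : ℕ → ℝ) (hΔ : ∀ n, 1 ≤ Δ n) (t : ℝ) : t < S Δ (idx Δ hΔ t + 1) := by
  classical exact Nat.find_spec (exists_lt_S Δ hΔ t)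

lemma S_idx_le (Δ : ℕ → ℝ) (hΔ : ∀ n, 1 ≤ Δ n) {t : ℝ} (ht : 0 ≤ t) : S Δ (idx Δ hΔ t) ≤ t := by
  classical
  rcases Nat.eq_zero_or_pos (idx Δ hΔ t) with h | h
  · rw [h, S_zero]; exact ht
  · obtain ⟨m, hm⟩ := Nat.exists_eq_succ_of_ne_zero h.ne'
    have hmlt : m < Nat.find (exists_lt_S Δ hΔ t) := by
      rw [idx] at hm; omega
    have := Nat.find_min (exists_lt_S Δ hΔ t) hmlt
    rw [hm]
    exact not_lt.1 this

lemma idx_eq (Δ : ℕ → ℝ) (hΔ : ∀ n, 1 ≤ Δ n) {n : ℕ} {t : ℝ} (h1 : S Δ n ≤ t) (h2 : t < S Δ (n + 1)) :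
    idx Δ hΔ t = n := by
  classical
  rw [idx, Nat.find_eq_iff]
  refine ⟨h2, fun m hm => not_lt.2 (le_trans (S_mono Δ hΔ (by omega : m + 1 ≤ n)) h1)⟩

lemma idx_mono (Δ : ℕ → ℝ) (hΔ : ∀ n, 1 ≤ Δ n) {t u : ℝ} (h : t ≤ u) : idx Δ hΔ t ≤ idx Δ hΔ u := by
  classical
  exact Nat.find_min' _ (lt_of_le_of_lt h (lt_S_idx_succ Δ hΔ u))

lemma le_idx (Δ : ℕ → ℝ) (hΔ : ∀ n, 1 ≤ Δ n) {n : ℕ} {t : ℝ} (h : S Δ n ≤ t) : n ≤ idx Δ hΔ t := by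
  by_contra hc
  push_neg at hc
  have h1 : t < S Δ (idx Δ hΔ t + 1) := lt_S_idx_succ Δ hΔ t
  have h2 : S Δ (idx Δ hΔ t + 1) ≤ S Δ n := S_mono Δ hΔ (by omega)
  linarith

lemma idx_zero (Δ : ℕ → ℝ) (hΔ : ∀ n, 1 ≤ Δ n) : idx Δ hΔ 0 = 0 :=
  idx_eq Δ hΔ (by rw [S_zero]) (by rw [S_succ, S_zero]; linarith [Δ_pos Δ hΔ 0])

noncomputable def g (Δ : ℕ → ℝ) (hΔ : ∀ n, 1 ≤ Δ n) (t : ℝ) : ℝ :=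
  if t < 0 then t / Δ 0
  else idx Δ hΔ t + (t - S Δ (idx Δ hΔ t)) / Δ (idx Δ hΔ t)

lemma g_of_nonneg (Δ : ℕ → ℝ) (hΔ : ∀ n, 1 ≤ Δ n) {t : ℝ} (ht : 0 ≤ t) :
    g Δ hΔ t = idx Δ hΔ t + (t - S Δ (idx Δ hΔ t)) / Δ (idx Δ hΔ t) := by
  rw [g, if_neg (not_lt.2 ht)]

lemma g_zero (Δ : ℕ → ℝ) (hΔ : ∀ n, 1 ≤ Δ n) : g Δ hΔ 0 = 0 := by
  rw [g_of_nonneg Δ hΔ le_rfl, idx_zero, S_zero]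
  simp

lemma g_S (Δ : ℕ → ℝ) (hΔ : ∀ n, 1 ≤ Δ n) (n : ℕ) : g Δ hΔ (S Δ n) = n := by
  rw [g_of_nonneg Δ hΔ (S_nonneg Δ hΔ n),
    idx_eq Δ hΔ le_rfl (by rw [S_succ]; linarith [Δ_pos Δ hΔ n])]
  simp

lemma idx_le_g (Δ : ℕ → ℝ) (hΔ : ∀ n, 1 ≤ Δ n) {t : ℝ} (ht : 0 ≤ t) : (idx Δ hΔ t : ℝ) ≤ g Δ hΔ t := by
  rw [g_of_nonneg Δ hΔ ht]
  have h1 : 0 ≤ t - S Δ (idx Δ hΔ t) := sub_nonneg.2 (S_idx_le Δ hΔ ht)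
  have h2 := Δ_pos Δ hΔ (idx Δ hΔ t)
  have : 0 ≤ (t - S Δ (idx Δ hΔ t)) / Δ (idx Δ hΔ t) := div_nonneg h1 h2.le
  linarith

lemma g_lt_idx_add_one (Δ : ℕ → ℝ) (hΔ : ∀ n, 1 ≤ Δ n) {t : ℝ} (ht : 0 ≤ t) : g Δ hΔ t < idx Δ hΔ t + 1 := by
  rw [g_of_nonneg Δ hΔ ht]
  have h2 := Δ_pos Δ hΔ (idx Δ hΔ t)
  have h3 : t - S Δ (idx Δ hΔ t) < Δ (idx Δ hΔ t) := by
    have := lt_S_idx_succ Δ hΔ t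
    rw [S_succ] at this
    linarith
  have : (t - S Δ (idx Δ hΔ t)) / Δ (idx Δ hΔ t) < 1 := (div_lt_one h2).2 h3
  linarith

lemma g_nonneg (Δ : ℕ → ℝ) (hΔ : ∀ n, 1 ≤ Δ n) {t : ℝ} (ht : 0 ≤ t) : 0 ≤ g Δ hΔ t :=
  le_trans (by positivity) (idx_le_g Δ hΔ ht)

/-- slope bound: on `[b, ∞)` the function `g` grows at most with slope `1 / Δ (idx b)`,
provided `Δ` is monotone. -/
lemma g_sub_le (Δ : ℕ → ℝ) (hΔ : ∀ n, 1 ≤ Δ n) (hmono : Monotone Δ) :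
    ∀ k : ℕ, ∀ a b : ℝ, 0 ≤ b → b ≤ a → idx Δ hΔ a - idx Δ hΔ b ≤ k →
      g Δ hΔ a - g Δ hΔ b ≤ (a - b) / Δ (idx Δ hΔ b) := by
  intro k
  induction k with
  | zero =>
    intro a b hb hba hk
    have hle : idx Δ hΔ b ≤ idx Δ hΔ a := idx_mono Δ hΔ hba
    have heq : idx Δ hΔ a = idx Δ hΔ b := by omega
    have hp := Δ_pos Δ hΔ (idx Δ hΔ b)
    rw [g_of_nonneg Δ hΔ (hb.trans hba), g_of_nonneg Δ hΔ hb, heq]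
    apply le_of_eq
    field_simp
    ring
  | succ k ih =>
    intro a b hb hba hk
    by_cases h : idx Δ hΔ a = idx Δ hΔ b
    · have hp := Δ_pos Δ hΔ (idx Δ hΔ b)
      rw [g_of_nonneg Δ hΔ (hb.trans hba), g_of_nonneg Δ hΔ hb, h]
      apply le_of_eq
      field_simp
      ring
    · have hlt : idx Δ hΔ b < idx Δ hΔ a :=
        lt_of_le_of_ne (idx_mono Δ hΔ hba) (Ne.symm h)
      set m := idx Δ hΔ b with hm
      have hSm1a : S Δ (m + 1) ≤ a := by
        by_contra hc
        push_neg at hc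
        have : idx Δ hΔ a ≤ m := by
          classical
          exact Nat.find_min' _ hc
        omega
      have hidxS : idx Δ hΔ (S Δ (m + 1)) = m + 1 :=
        idx_eq Δ hΔ le_rfl (by rw [S_succ (n := m + 1)]; linarith [Δ_pos Δ hΔ (m+1)])
      have step1 : g Δ hΔ a - g Δ hΔ (S Δ (m + 1)) ≤ (a - S Δ (m + 1)) / Δ (m + 1) := by
        have := ih a (S Δ (m + 1)) (S_nonneg Δ hΔ _) hSm1a (by rw [hidxS]; omega)
        rwa [hidxS] at this
      have step2 : g Δ hΔ (S Δ (m + 1)) - g Δ hΔ b = (S Δ (m + 1) - b) / Δ m := by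
        rw [g_S, g_of_nonneg Δ hΔ hb, ← hm, S_succ]
        have hΔm := Δ_pos Δ hΔ m
        field_simp
        push_cast
        ring
      have h1 : (a - S Δ (m + 1)) / Δ (m + 1) ≤ (a - S Δ (m + 1)) / Δ m :=
        div_le_div_of_nonneg_left (by linarith) (Δ_pos Δ hΔ m) (hmono (Nat.le_succ m))
      have hfin : (a - S Δ (m + 1)) / Δ m + (S Δ (m + 1) - b) / Δ m = (a - b) / Δ m := by
        rw [← add_div]
        ring_nf
      linarith [step1, step2, h1, hfin]

lemma g_strictMono (Δ : ℕ → ℝ) (hΔ : ∀ n, 1 ≤ Δ n) (hmono : Monotone Δ) :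
    StrictMono (g Δ hΔ) := by
  intro t u htu
  by_cases ht : t < 0
  · by_cases hu : u < 0
    · rw [g, if_pos ht, g, if_pos hu]
      exact div_lt_div_of_pos_right htu (Δ_pos Δ hΔ 0)
    · push_neg at hu
      have h1 : g Δ hΔ t < 0 := by
        rw [g, if_pos ht]
        exact div_neg_of_neg_of_pos ht (Δ_pos Δ hΔ 0)
      exact lt_of_lt_of_le h1 (g_nonneg Δ hΔ hu)
  · push_neg at ht
    have hu : 0 ≤ u := le_of_lt (lt_of_le_of_lt ht htu)
    have hmn : idx Δ hΔ t ≤ idx Δ hΔ u := idx_mono Δ hΔ htu.le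
    rcases eq_or_lt_of_le hmn with heq | hlt
    · rw [g_of_nonneg Δ hΔ ht, g_of_nonneg Δ hΔ hu, ← heq]
      have hp := Δ_pos Δ hΔ (idx Δ hΔ t)
      have : (t - S Δ (idx Δ hΔ t)) / Δ (idx Δ hΔ t)
          < (u - S Δ (idx Δ hΔ t)) / Δ (idx Δ hΔ t) :=
        div_lt_div_of_pos_right (by linarith) hp
      linarith
    · have h1 : g Δ hΔ t < idx Δ hΔ t + 1 := g_lt_idx_add_one Δ hΔ ht
      have h2 : (idx Δ hΔ u : ℝ) ≤ g Δ hΔ u := idx_le_g Δ hΔ hu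
      have h3 : (idx Δ hΔ t : ℝ) + 1 ≤ idx Δ hΔ u := by exact_mod_cast hlt
      linarith

lemma g_surj (Δ : ℕ → ℝ) (hΔ : ∀ n, 1 ≤ Δ n) : Function.Surjective (g Δ hΔ) := by
  intro v
  rcases lt_or_ge v 0 with hv | hv
  · refine ⟨v * Δ 0, ?_⟩
    have hneg : v * Δ 0 < 0 := mul_neg_of_neg_of_pos hv (Δ_pos Δ hΔ 0)
    rw [g, if_pos hneg, mul_div_cancel_right₀ _ (Δ_pos Δ hΔ 0).ne']
  · set n := ⌊v⌋₊ with hn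
    have h1 : (n : ℝ) ≤ v := Nat.floor_le hv
    have h2 : v < n + 1 := Nat.lt_floor_add_one v
    have hp := Δ_pos Δ hΔ n
    refine ⟨S Δ n + (v - n) * Δ n, ?_⟩
    have ht0 : 0 ≤ S Δ n + (v - n) * Δ n := by
      have := S_nonneg Δ hΔ n
      nlinarith
    have hidx : idx Δ hΔ (S Δ n + (v - n) * Δ n) = n := by
      apply idx_eq
      · nlinarith
      · rw [S_succ]
        nlinarith
    rw [g_of_nonneg Δ hΔ ht0, hidx]
    field_simp
    ring

lemma g_le_self (Δ : ℕ → ℝ) (hΔ : ∀ n, 1 ≤ Δ n) (hmono : Monotone Δ) {t : ℝ}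
    (ht : 0 ≤ t) : g Δ hΔ t ≤ t := by
  have := g_sub_le Δ hΔ hmono (idx Δ hΔ t) t 0 le_rfl ht (by rw [idx_zero]; omega)
  rw [g_zero, idx_zero] at this
  rw [sub_zero, sub_zero] at this
  have h2 : t / Δ 0 ≤ t := div_le_self ht (hΔ 0)
  linarith

end Stmt4

/-- If a family `K` of continuous functions on `ℝ^d` is uniformly
equicontinuous on every closed ball, then there is a self-homeomorphism `ψ` of `ℝ^d`
such that `{f ∘ ψ : f ∈ K}` is uniformly equicontinuous on all of `ℝ^d`. -/
theorem stmt_4 {d : ℕ} (K : Set (EuclideanSpace ℝ (Fin d) → ℝ))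
    (hKcont : ∀ f ∈ K, Continuous f)
    (hKeq : ∀ (c : EuclideanSpace ℝ (Fin d)) (R : ℝ), ∀ ε > 0, ∃ δ > 0,
      ∀ f ∈ K, ∀ x y : EuclideanSpace ℝ (Fin d),
        dist x c ≤ R → dist y c ≤ R → dist x y ≤ δ → |f x - f y| < ε) :
    ∃ ψ : Homeomorph (EuclideanSpace ℝ (Fin d)) (EuclideanSpace ℝ (Fin d)),
      ∀ ε > 0, ∃ δ > 0, ∀ f ∈ K, ∀ x y : EuclideanSpace ℝ (Fin d),
        dist x y ≤ δ → |f (ψ x) - f (ψ y)| < ε := by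
  classical
  -- Step 1: choose moduli of continuity on the balls of radius n+2
  have H : ∀ n : ℕ, ∃ δ > 0, ∀ f ∈ K, ∀ x y : EuclideanSpace ℝ (Fin d),
      dist x 0 ≤ (n:ℝ) + 2 → dist y 0 ≤ (n:ℝ) + 2 → dist x y ≤ δ →
        |f x - f y| < 1/((n:ℝ)+1) :=
    fun n => hKeq 0 ((n:ℝ)+2) (1/((n:ℝ)+1)) (by positivity)
  choose η₀ hη₀pos hη₀ using H
  -- an antitone version of the moduli
  set η : ℕ → ℝ := fun n => Nat.rec (min 1 (η₀ 0)) (fun k ih => min ih (η₀ (k+1))) n with hη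
  have hηsucc : ∀ n, η (n+1) = min (η n) (η₀ (n+1)) := fun n => rfl
  have hηpos : ∀ n, 0 < η n := by
    intro n; induction n with
    | zero => exact lt_min one_pos (hη₀pos 0)
    | succ n ih => rw [hηsucc]; exact lt_min ih (hη₀pos (n+1))
  have hηanti : ∀ m n, m ≤ n → η n ≤ η m := by
    have h1 : ∀ n, η (n+1) ≤ η n := fun n => by rw [hηsucc]; exact min_le_left _ _
    intro m n h
    exact antitone_nat_of_succ_le h1 h
  have hηle₀ : ∀ n, η n ≤ η₀ n := by
    intro n; cases n with
    | zero => exact min_le_right _ _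
    | succ n => rw [hηsucc]; exact min_le_right _ _
  have hmod : ∀ n : ℕ, ∀ f ∈ K, ∀ x y : EuclideanSpace ℝ (Fin d),
      dist x 0 ≤ (n:ℝ)+2 → dist y 0 ≤ (n:ℝ)+2 → dist x y ≤ η n →
        |f x - f y| < 1/((n:ℝ)+1) :=
    fun n f hf x y hx hy hxy => hη₀ n f hf x y hx hy (le_trans hxy (hηle₀ n))
  clear hη
  clear_value η
  -- Step 2: the sequence of interval lengths
  set Δ : ℕ → ℝ := fun n => 1 + 2 / η n + 4*((n:ℝ)+1) / η (n+1) with hΔdef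
  have hΔ : ∀ n, 1 ≤ Δ n := by
    intro n
    have h1 : 0 < 2 / η n := div_pos two_pos (hηpos n)
    have h2 : 0 ≤ 4*((n:ℝ)+1) / η (n+1) := div_nonneg (by positivity) (hηpos (n+1)).le
    simp only [hΔdef]; linarith
  have hΔmono : Monotone Δ := by
    apply monotone_nat_of_le_succ
    intro n
    have e1 : 2 / η n ≤ 2 / η (n+1) :=
      div_le_div_of_nonneg_left (by norm_num) (hηpos (n+1)) (hηanti n (n+1) (Nat.le_succ n))
    have e2 : 4*((n:ℝ)+1) / η (n+1) ≤ 4*((n:ℝ)+1+1) / η (n+1+1) :=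
      div_le_div₀ (by positivity) (by linarith) (hηpos (n+1+1)) (hηanti (n+1) (n+1+1) (by omega))
    simp only [hΔdef]
    push_cast
    push_cast at e2
    linarith
  have hΔ2 : ∀ n, 2 / η n ≤ Δ n := by
    intro n
    have h2 : 0 ≤ 4*((n:ℝ)+1) / η (n+1) := div_nonneg (by positivity) (hηpos (n+1)).le
    simp only [hΔdef]; linarith
  have hΔ4 : ∀ n : ℕ, 4*((n:ℝ)+1) / η (n+1) ≤ Δ n := by
    intro n
    have h1 : 0 < 2 / η n := div_pos two_pos (hηpos n)
    simp only [hΔdef]; linarith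
  clear hΔdef
  clear_value Δ
  -- abbreviations
  set G : ℝ → ℝ := Stmt4.g Δ hΔ with hG
  have hGsm : StrictMono G := Stmt4.g_strictMono Δ hΔ hΔmono
  have hGsurj : Function.Surjective G := Stmt4.g_surj Δ hΔ
  have hG0 : G 0 = 0 := Stmt4.g_zero Δ hΔ
  set e : ℝ ≃o ℝ := StrictMono.orderIsoOfSurjective G hGsm hGsurj with he
  have hcoe : ⇑e = G := StrictMono.coe_orderIsoOfSurjective G hGsm hGsurj
  have he0 : e 0 = 0 := by rw [he, StrictMono.coe_orderIsoOfSurjective]; exact hG0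
  refine ⟨radialHomeo e he0, ?_⟩
  set ψ : EuclideanSpace ℝ (Fin d) → EuclideanSpace ℝ (Fin d) :=
    fun x => radialMap G x with hψ
  have hψeq : ∀ x : EuclideanSpace ℝ (Fin d), radialHomeo e he0 x = ψ x := by
    intro x; rw [radialHomeo_apply, hcoe]
  have hnormψ : ∀ x : EuclideanSpace ℝ (Fin d), ‖ψ x‖ = G ‖x‖ :=
    fun x => norm_radialMap G hG0 hGsm.monotone x
  clear_value ψ
  clear_value e
  clear_value G
  -- the growth bound: S n ≥ 4n/η n for n ≥ 1
  have hS4 : ∀ n : ℕ, 1 ≤ n → 4*(n:ℝ)/η n ≤ Stmt4.S Δ n := by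
    intro n hn
    obtain ⟨m, rfl⟩ : ∃ m, n = m + 1 := ⟨n - 1, by omega⟩
    rw [Stmt4.S_succ]
    have h1 := Stmt4.S_nonneg Δ hΔ m
    have h2 := hΔ4 m
    push_cast
    push_cast at h2
    linarith
  -- Step 3: the uniform equicontinuity of the composed family
  intro ε hε
  obtain ⟨N₀, hN₀⟩ := exists_nat_gt (1/ε)
  set N : ℕ := N₀ + 1 with hN
  have hN1 : 1 ≤ N := by omega
  have hNε : 1/((N:ℝ)+1) < ε := by
    have h1 : ε * (1/ε) = 1 := by field_simp
    have h2 : (N₀ : ℝ) ≤ (N:ℝ) := by exact_mod_cast Nat.le_succ N₀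
    rw [div_lt_iff₀ (by positivity)]
    nlinarith [mul_lt_mul_of_pos_left hN₀ hε]
  obtain ⟨δ', hδ'pos, hδ'⟩ := hKeq 0 ((N:ℝ)+2) ε hε
  refine ⟨min (1/3) (δ'/4), lt_min (by norm_num) (by linarith), ?_⟩
  set δ : ℝ := min (1/3) (δ'/4) with hδdef
  have hδ3 : δ ≤ 1/3 := min_le_left _ _
  have hδ4 : δ ≤ δ'/4 := min_le_right _ _
  have key : ∀ f ∈ K, ∀ x y : EuclideanSpace ℝ (Fin d), ‖y‖ ≤ ‖x‖ →
      dist x y ≤ δ → |f (ψ x) - f (ψ y)| < ε := by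
    intro f hf x y hxy hd
    rw [dist_eq_norm] at hd
    have hsub : ‖x‖ - ‖y‖ ≤ ‖x - y‖ := by
      calc ‖x‖ - ‖y‖ ≤ |‖x‖ - ‖y‖| := le_abs_self _
      _ ≤ ‖x - y‖ := abs_norm_sub_norm_le x y
    have hGmono : G ‖y‖ ≤ G ‖x‖ := hGsm.monotone hxy
    have hGbnn : 0 ≤ G ‖y‖ := by rw [hG]; exact Stmt4.g_nonneg Δ hΔ (norm_nonneg y)
    have hrr : ‖ψ x - ψ y‖ = ‖radialMap G x - radialMap G y‖ := by simp only [hψ]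
    by_cases hcase : Stmt4.S Δ N ≤ ‖y‖
    · -- outer case
      obtain ⟨n, hnN, hSn_le, hgb_lt, hgab⟩ :
          ∃ n : ℕ, N ≤ n ∧ Stmt4.S Δ n ≤ ‖y‖ ∧ G ‖y‖ < (n:ℝ) + 1 ∧
            G ‖x‖ - G ‖y‖ ≤ (‖x‖ - ‖y‖) / Δ n := by
        rw [hG]
        refine ⟨Stmt4.idx Δ hΔ ‖y‖, Stmt4.le_idx Δ hΔ hcase,
          Stmt4.S_idx_le Δ hΔ (norm_nonneg y),
          Stmt4.g_lt_idx_add_one Δ hΔ (norm_nonneg y),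
          Stmt4.g_sub_le Δ hΔ hΔmono (Stmt4.idx Δ hΔ ‖x‖ - Stmt4.idx Δ hΔ ‖y‖)
            ‖x‖ ‖y‖ (norm_nonneg y) hxy le_rfl⟩
      have hn1 : 1 ≤ n := le_trans hN1 hnN
      have hb0 : 0 < ‖y‖ := by
        have h1 : (N:ℝ) ≤ Stmt4.S Δ N := Stmt4.le_S Δ hΔ N
        have h2 : (1:ℝ) ≤ (N:ℝ) := by exact_mod_cast hN1
        linarith
      have hdiv : (‖x‖ - ‖y‖) / Δ n ≤ ‖x‖ - ‖y‖ :=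
        div_le_self (by linarith) (hΔ n)
      have hga_le : G ‖x‖ ≤ (n:ℝ) + 2 := by
        have : ‖x‖ - ‖y‖ ≤ δ := le_trans hsub hd
        nlinarith
      -- the C-bound : G‖y‖ / ‖y‖ ≤ η n / 2
      have hsn' : 4*(n:ℝ)/η n ≤ ‖y‖ := le_trans (hS4 n hn1) hSn_le
      have hηb : 4*(n:ℝ) ≤ η n * ‖y‖ := by
        have h1 : η n * (4*(n:ℝ)/η n) ≤ η n * ‖y‖ :=
          mul_le_mul_of_nonneg_left hsn' (hηpos n).le
        rwa [mul_div_cancel₀ _ (hηpos n).ne'] at h1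
      have hgC : G ‖y‖ / ‖y‖ ≤ η n / 2 := by
        rw [div_le_div_iff₀ hb0 (by norm_num : (0:ℝ) < 2)]
        have hn1' : (1:ℝ) ≤ (n:ℝ) := by exact_mod_cast hn1
        nlinarith
      have hL2 : 1 / Δ n ≤ η n / 2 := by
        have h1 : 0 < 2 / η n := div_pos two_pos (hηpos n)
        have h2 : 1 / Δ n ≤ 1 / (2 / η n) :=
          one_div_le_one_div_of_le h1 (hΔ2 n)
        rwa [one_div_div] at h2
      have hest : ‖ψ x - ψ y‖ ≤ (2*(1/Δ n) + 2*(η n/2)) * ‖x - y‖ := by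
        rw [hrr]
        apply norm_radialMap_sub_le G x y hb0 hxy hGbnn hgC ?_ hGmono (one_div_nonneg.2 (by linarith [hΔ n]))
        have : (1/Δ n) * (‖x‖ - ‖y‖) = (‖x‖ - ‖y‖) / Δ n := by ring
        rw [this]
        exact hgab
      have himgdist : ‖ψ x - ψ y‖ ≤ η n := by
        have h1 : (2*(1/Δ n) + 2*(η n/2)) ≤ 2 * η n := by linarith
        have h2 : ‖x - y‖ ≤ 1/3 := le_trans hd hδ3
        calc ‖ψ x - ψ y‖ ≤ (2*(1/Δ n) + 2*(η n/2)) * ‖x - y‖ := hest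
          _ ≤ 2 * η n * (1/3) := by
              apply mul_le_mul h1 h2 (norm_nonneg _) (by linarith [hηpos n])
          _ ≤ η n := by linarith [hηpos n]
      have hres : |f (ψ x) - f (ψ y)| < 1/((n:ℝ)+1) := by
        apply hmod n f hf
        · rw [dist_zero_right, hnormψ]; exact hga_le
        · rw [dist_zero_right, hnormψ]; linarith
        · rw [dist_eq_norm]; exact himgdist
      have hcomp : 1/((n:ℝ)+1) ≤ 1/((N:ℝ)+1) := by
        apply one_div_le_one_div_of_le (by positivity)
        have : (N:ℝ) ≤ (n:ℝ) := by exact_mod_cast hnN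
        linarith
      linarith
    · -- inner case
      push_neg at hcase
      have hga_le : G ‖x‖ ≤ (N:ℝ) + 1 := by
        by_cases haS : ‖x‖ ≤ Stmt4.S Δ N
        · have h1 : G ‖x‖ ≤ G (Stmt4.S Δ N) := hGsm.monotone haS
          have h2 : G (Stmt4.S Δ N) = N := by rw [hG]; exact Stmt4.g_S Δ hΔ N
          rw [h2] at h1
          linarith
        · push_neg at haS
          have h1 : G ‖x‖ - G (Stmt4.S Δ N) ≤ (‖x‖ - Stmt4.S Δ N) / Δ (Stmt4.idx Δ hΔ (Stmt4.S Δ N)) := by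
            rw [hG]
            exact Stmt4.g_sub_le Δ hΔ hΔmono (Stmt4.idx Δ hΔ ‖x‖ - Stmt4.idx Δ hΔ (Stmt4.S Δ N))
              ‖x‖ (Stmt4.S Δ N) (Stmt4.S_nonneg Δ hΔ N) haS.le le_rfl
          have h2 : (‖x‖ - Stmt4.S Δ N) / Δ (Stmt4.idx Δ hΔ (Stmt4.S Δ N)) ≤ ‖x‖ - Stmt4.S Δ N :=
            div_le_self (by linarith) (hΔ _)
          have h3 : G (Stmt4.S Δ N) = N := by rw [hG]; exact Stmt4.g_S Δ hΔ N
          have h4 : ‖x‖ - Stmt4.S Δ N ≤ δ := by linarith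
          have h5 : δ ≤ 1 := by linarith
          linarith
      have hgb_le : G ‖y‖ ≤ (N:ℝ) + 1 := le_trans hGmono hga_le
      have himgdist : ‖ψ x - ψ y‖ ≤ 4 * ‖x - y‖ := by
        rcases eq_or_lt_of_le (norm_nonneg y) with hb0 | hb0
        · -- y = 0
          have hy0 : y = 0 := norm_eq_zero.1 hb0.symm
          have hψy : ψ y = 0 := by subst hy0; simp only [hψ]; exact radialMap_zero G
          rw [hψy, sub_zero, hnormψ]
          have h1 : G ‖x‖ ≤ ‖x‖ := by rw [hG]; exact Stmt4.g_le_self Δ hΔ hΔmono (norm_nonneg x)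
          have h2 : ‖x - y‖ = ‖x‖ := by rw [hy0, sub_zero]
          rw [h2]
          linarith [norm_nonneg x]
        · -- y ≠ 0
          have hgC : G ‖y‖ / ‖y‖ ≤ 1 := by
            rw [div_le_one hb0, hG]
            exact Stmt4.g_le_self Δ hΔ hΔmono (norm_nonneg y)
          have hgL : G ‖x‖ - G ‖y‖ ≤ 1 * (‖x‖ - ‖y‖) := by
            have h1 : G ‖x‖ - G ‖y‖ ≤ (‖x‖ - ‖y‖) / Δ (Stmt4.idx Δ hΔ ‖y‖) := by
              rw [hG]
              exact Stmt4.g_sub_le Δ hΔ hΔmono (Stmt4.idx Δ hΔ ‖x‖ - Stmt4.idx Δ hΔ ‖y‖)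
                ‖x‖ ‖y‖ (norm_nonneg y) hxy le_rfl
            have h2 : (‖x‖ - ‖y‖) / Δ (Stmt4.idx Δ hΔ ‖y‖) ≤ ‖x‖ - ‖y‖ :=
              div_le_self (by linarith) (hΔ _)
            linarith
          have := norm_radialMap_sub_le G x y hb0 hxy hGbnn hgC hgL hGmono (by norm_num)
          calc ‖ψ x - ψ y‖ ≤ (2*1 + 2*1) * ‖x - y‖ := by rw [hrr]; exact this
            _ = 4 * ‖x - y‖ := by ring
      apply hδ' f hf
      · rw [dist_zero_right, hnormψ]; linarith
      · rw [dist_zero_right, hnormψ]; linarith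
      · rw [dist_eq_norm]
        calc ‖ψ x - ψ y‖ ≤ 4 * ‖x - y‖ := himgdist
          _ ≤ 4 * δ := by linarith [himgdist]
          _ ≤ δ' := by linarith
  intro f hf x y hd
  rw [hψeq, hψeq]
  rcases le_total ‖y‖ ‖x‖ with h | h
  · exact key f hf x y h hd
  · rw [abs_sub_comm]
    exact key f hf y x h (by rwa [dist_comm])
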